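/- Let n = 2^r with r ≥ 1 and let M be the sub-add matrix acting on (ℤ/2^rℤ)² by (a,b) ↦ (a−b, a+b). Then the subgraph of Γ_{M,2^r} induced on the nonzero vertices is an inverted perfect binary tree of depth 2r−1 rooted at (2^{r−1}, 2^{r−1}). Concretely: (i) (2^{r−1}, 2^{r−1}) is the unique nonzero vertex v with Mv = (0,0); (ii) every vertex in P_0 is parentless (these are the leaves), and for r > 1 every nonzero vertex not in P_0 has exactly two parents; (iii) every vertex v ∈ P_i with 0 ≤ i ≤ 2r−1 satisfies M^{2r−1−i} v = (2^{r−1}, 2^{r−1}), so every leaf is at distance exactly 2r−1 from the root. Moreover, Γ_{M,2^r} is recovered from this tree by adding the vertex (0,0) together with the arcs ((2^{r−1},2^{r−1}), (0,0)) and ((0,0), (0,0)). -/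

import Mathlib

/-- The sub-add map `(a,b) ↦ (a-b, a+b)` on `(ℤ/nℤ)²`; the sub-add move graph `Γ_{M,n}`
has an arc from `v` to `subAddStep n v`. -/
def subAddStep (n : ℕ) (v : ZMod n × ZMod n) : ZMod n × ZMod n :=
  (v.1 - v.2, v.1 + v.2)

section helpers
variable {r : ℕ}

lemma neZero' : NeZero (2^r) := ⟨(pow_pos two_pos r).ne'⟩

lemma val_add_mod2 (hr : 1 ≤ r) (x y : ZMod (2^r)) :
    (x + y).val % 2 = (x.val + y.val) % 2 := by
  haveI := @neZero' r
  rw [ZMod.val_add]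
  exact Nat.mod_mod_of_dvd _ (dvd_pow_self 2 (by omega))

lemma val_neg_mod2 (hr : 1 ≤ r) (x : ZMod (2^r)) : (-x).val % 2 = x.val % 2 := by
  haveI := @neZero' r
  have h := val_add_mod2 hr (-x) x
  rw [neg_add_cancel] at h
  simp only [ZMod.val_zero] at h
  omega

lemma val_sub_mod2 (hr : 1 ≤ r) (x y : ZMod (2^r)) :
    (x - y).val % 2 = (x.val + y.val) % 2 := by
  rw [sub_eq_add_neg, val_add_mod2 hr]
  have := val_neg_mod2 hr y
  omega

lemma natCast_val' (x : ZMod (2^r)) : ((x.val : ℕ) : ZMod (2^r)) = x := by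
  haveI := @neZero' r
  exact ZMod.natCast_rightInverse x

lemma two_pow_r_zero : (2 : ZMod (2^r))^r = 0 := by
  have : ((2^r : ℕ) : ZMod (2^r)) = 0 := ZMod.natCast_self _
  push_cast at this
  exact this

lemma pow_mul_odd (hr : 1 ≤ r) {x : ZMod (2^r)} (hx : x.val % 2 = 1) :
    (2 : ZMod (2^r))^(r-1) * x = 2^(r-1) := by
  obtain ⟨m, hm⟩ : ∃ m, x.val = 2*m + 1 := ⟨x.val / 2, by omega⟩
  have hx' : x = ((2*m+1 : ℕ) : ZMod (2^r)) := by rw [← hm, natCast_val']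
  have h2 : (2:ZMod (2^r))^(r-1) * 2 = 2^r := by
    rw [← pow_succ]; congr 1; omega
  rw [hx']
  push_cast
  calc (2:ZMod (2^r))^(r-1) * (2*(m:ZMod (2^r))+1)
      = ((2:ZMod (2^r))^(r-1)*2)*m + 2^(r-1) := by ring
    _ = 2^(r-1) := by rw [h2, two_pow_r_zero]; ring

lemma pow_rsub1_ne_zero (hr : 1 ≤ r) : (2 : ZMod (2^r))^(r-1) ≠ 0 := by
  haveI := @neZero' r
  intro h
  have h1 : ((2^(r-1) : ℕ) : ZMod (2^r)) = 0 := by push_cast; exact h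
  have h2 := (ZMod.natCast_eq_zero_iff _ _).1 h1
  have h3 := Nat.le_of_dvd (pow_pos two_pos _) h2
  have h4 : 2^(r-1) < 2^r := Nat.pow_lt_pow_right one_lt_two (by omega)
  omega

lemma two_mul_eq_zero_iff (hr : 1 ≤ r) (z : ZMod (2^r)) :
    2 * z = 0 ↔ z = 0 ∨ z = 2^(r-1) := by
  haveI := @neZero' r
  constructor
  · intro h
    obtain ⟨m, hmlt, hmz⟩ : ∃ m, m < 2^r ∧ z = ((m : ℕ) : ZMod (2^r)) :=
      ⟨z.val, ZMod.val_lt z, (natCast_val' z).symm⟩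
    have hcast : ((2 * m : ℕ) : ZMod (2^r)) = 0 := by
      push_cast; rw [← hmz]; exact h
    have hdvd : 2^r ∣ 2 * m := (ZMod.natCast_eq_zero_iff _ _).1 hcast
    have h2r : 2^r = 2 * 2^(r-1) := by rw [← pow_succ']; congr 1; omega
    obtain ⟨k, hk⟩ := hdvd
    rw [h2r, mul_assoc] at hk
    have hk' : m = 2^(r-1) * k := Nat.eq_of_mul_eq_mul_left two_pos hk
    have hp : 0 < 2^(r-1) := pow_pos two_pos _
    have hk2 : k < 2 := by
      by_contra hh
      push_neg at hh
      rw [h2r] at hmlt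
      nlinarith
    interval_cases k
    · left
      rw [hmz]
      have : m = 0 := by omega
      rw [this]; simp
    · right
      rw [hmz]
      have : m = 2^(r-1) := by omega
      rw [this]; push_cast; ring
  · rintro (rfl | rfl)
    · ring
    · rw [← pow_succ']
      have : r - 1 + 1 = r := by omega
      rw [this, two_pow_r_zero]

lemma iter_core (hr : 1 ≤ r) : ∀ s t (x y : ZMod (2^r)), s + t = r - 1 →
    x.val % 2 = 1 → y.val % 2 = 1 →
    (subAddStep (2^r))^[2*s] ((2:ZMod (2^r))^t * x, (2:ZMod (2^r))^t * y)
      = ((2:ZMod (2^r))^(r-1), (2:ZMod (2^r))^(r-1)) := by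
  intro s
  induction s with
  | zero =>
    intro t x y h hx hy
    have ht : t = r - 1 := by omega
    subst ht
    simp only [Nat.mul_zero, Function.iterate_zero, id_eq]
    rw [pow_mul_odd hr hx, pow_mul_odd hr hy]
  | succ s ih =>
    intro t x y h hx hy
    have hstep : (subAddStep (2^r)) ((subAddStep (2^r)) ((2:ZMod (2^r))^t * x, (2:ZMod (2^r))^t * y))
        = ((2:ZMod (2^r))^(t+1) * (-y), (2:ZMod (2^r))^(t+1) * x) := by
      simp only [subAddStep, Prod.mk.injEq]
      constructor <;> ring
    rw [show 2*(s+1) = 2*s + 2 by ring, Function.iterate_add_apply,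
      show (subAddStep (2^r))^[2] ((2:ZMod (2^r))^t * x, (2:ZMod (2^r))^t * y)
        = (subAddStep (2^r)) ((subAddStep (2^r)) ((2:ZMod (2^r))^t * x, (2:ZMod (2^r))^t * y)) from rfl,
      hstep]
    exact ih (t+1) (-y) x (by omega) (by rw [val_neg_mod2 hr]; exact hy) hx

end helpers

/-- The level sets `P_i` partitioning `(ℤ/2^rℤ)²`: for `0 ≤ t ≤ r-1`,
`P_{2t} = {(2^t x, 2^t y) : exactly one of x, y odd}` and
`P_{2t+1} = {(2^t x, 2^t y) : both x, y odd}`, and `P_{2r} = {(0,0)}`.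
Parity of an element of `ℤ/2^rℤ` is the parity of its canonical representative `val`. -/
def P (r i : ℕ) : Set (ZMod (2 ^ r) × ZMod (2 ^ r)) :=
  if i = 2 * r then {(0, 0)}
  else if Even i then
    {v | ∃ x y : ZMod (2 ^ r),
      v = ((2 : ZMod (2 ^ r)) ^ (i / 2) * x, (2 : ZMod (2 ^ r)) ^ (i / 2) * y) ∧
        Xor' (Odd x.val) (Odd y.val)}
  else
    {v | ∃ x y : ZMod (2 ^ r),
      v = ((2 : ZMod (2 ^ r)) ^ (i / 2) * x, (2 : ZMod (2 ^ r)) ^ (i / 2) * y) ∧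
        Odd x.val ∧ Odd y.val}

lemma mem_P_zero {r : ℕ} (hr : 1 ≤ r) (v : ZMod (2^r) × ZMod (2^r)) :
    v ∈ P r 0 ↔ Xor' (Odd v.1.val) (Odd v.2.val) := by
  unfold P
  rw [if_neg (by omega), if_pos Even.zero]
  simp only [Set.mem_setOf_eq, Nat.zero_div, pow_zero, one_mul]
  constructor
  · rintro ⟨x, y, rfl, h⟩; exact h
  · intro h; exact ⟨v.1, v.2, by simp, h⟩

/-- the subgraph of `Γ_{M,2^r}` induced on the nonzero vertices is an
inverted perfect binary tree of depth `2r-1` rooted at `c = (2^{r-1}, 2^{r-1})`: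
(i) `c` is the unique nonzero vertex mapping to `(0,0)`;
(ii) the vertices of `P_0` are parentless (the leaves), and for `r > 1` every nonzero
vertex not in `P_0` has exactly two parents;
(iii) every `v ∈ P_i` with `0 ≤ i ≤ 2r-1` satisfies `M^{2r-1-i} v = c` (so every leaf is
at distance exactly `2r-1` from the root).
Moreover `Γ_{M,2^r}` is recovered by adding the vertex `(0,0)` with the arcs
`(c, (0,0))` and `((0,0), (0,0))`. -/
theorem stmt10 (r : ℕ) (hr : 1 ≤ r) :
    (((2 : ZMod (2 ^ r)) ^ (r - 1), (2 : ZMod (2 ^ r)) ^ (r - 1)) ≠ ((0 : ZMod (2 ^ r)), (0 : ZMod (2 ^ r))) ∧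
      subAddStep (2 ^ r) ((2 : ZMod (2 ^ r)) ^ (r - 1), (2 : ZMod (2 ^ r)) ^ (r - 1)) = (0, 0) ∧
      ∀ v : ZMod (2 ^ r) × ZMod (2 ^ r), v ≠ (0, 0) → subAddStep (2 ^ r) v = (0, 0) →
        v = ((2 : ZMod (2 ^ r)) ^ (r - 1), (2 : ZMod (2 ^ r)) ^ (r - 1))) ∧
    (∀ v ∈ P r 0, ¬ ∃ u, subAddStep (2 ^ r) u = v) ∧
    (1 < r → ∀ v : ZMod (2 ^ r) × ZMod (2 ^ r), v ≠ (0, 0) → v ∉ P r 0 →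
      {u : ZMod (2 ^ r) × ZMod (2 ^ r) | subAddStep (2 ^ r) u = v}.ncard = 2) ∧
    (∀ i ≤ 2 * r - 1, ∀ v ∈ P r i,
      (subAddStep (2 ^ r))^[2 * r - 1 - i] v =
        ((2 : ZMod (2 ^ r)) ^ (r - 1), (2 : ZMod (2 ^ r)) ^ (r - 1))) ∧
    subAddStep (2 ^ r) (0, 0) = ((0 : ZMod (2 ^ r)), (0 : ZMod (2 ^ r))) := by
  have hpow0 : (2 : ZMod (2^r)) * 2^(r-1) = 0 := (two_mul_eq_zero_iff hr _).2 (Or.inr rfl)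
  refine ⟨⟨?_, ?_, ?_⟩, ?_, ?_, ?_, ?_⟩
  · -- c ≠ 0
    intro h
    rw [Prod.mk.injEq] at h
    exact pow_rsub1_ne_zero hr h.1
  · -- M c = 0
    have h : (2:ZMod (2^r))^(r-1) + 2^(r-1) = 0 := by rw [← two_mul]; exact hpow0
    simp [subAddStep, h]
  · -- uniqueness
    intro v hv h
    simp only [subAddStep, Prod.mk.injEq] at h
    obtain ⟨h1, h2⟩ := h
    have hv2 : v.2 = v.1 := (sub_eq_zero.1 h1).symm
    have h2' : 2 * v.1 = 0 := by rw [hv2] at h2; linear_combination h2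
    rcases (two_mul_eq_zero_iff hr _).1 h2' with h0 | hc
    · exact absurd (Prod.ext h0 (by rw [hv2, h0])) hv
    · exact Prod.ext hc (by rw [hv2, hc])
  · -- P_0 parentless
    rintro v hv ⟨u, hu⟩
    rw [mem_P_zero hr] at hv
    simp only [subAddStep] at hu
    have hsum : v.1 + v.2 = u.1 + u.1 := by
      rw [← hu]; simp only; ring
    have h1 := val_add_mod2 hr v.1 v.2
    have h2 := val_add_mod2 hr u.1 u.1
    rw [hsum] at h1
    rw [Nat.odd_iff, Nat.odd_iff] at hv
    rcases hv with ⟨ha, hb⟩ | ⟨ha, hb⟩ <;> omega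
  · -- two parents
    intro _ v hv hvP
    have hpar : v.1.val % 2 = v.2.val % 2 := by
      by_contra hne
      apply hvP
      rw [mem_P_zero hr, Nat.odd_iff, Nat.odd_iff]
      unfold Xor' Xor
      omega
    have hw : (v.1 + v.2).val % 2 = 0 := by
      rw [val_add_mod2 hr]; omega
    set c0 : ZMod (2^r) := (((v.1 + v.2).val / 2 : ℕ) : ZMod (2^r)) with hc0
    have h2c0 : 2 * c0 = v.1 + v.2 := by
      rw [hc0]
      have he : (2 * ((v.1 + v.2).val / 2) : ℕ) = (v.1 + v.2).val := by omega
      rw [show (2 : ZMod (2^r)) * (((v.1 + v.2).val / 2 : ℕ) : ZMod (2^r))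
          = ((2 * ((v.1 + v.2).val / 2) : ℕ) : ZMod (2^r)) by push_cast; ring,
        he, natCast_val']
    have hset : {u : ZMod (2^r) × ZMod (2^r) | subAddStep (2^r) u = v} =
        {(c0, c0 - v.1), (c0 + 2^(r-1), c0 + 2^(r-1) - v.1)} := by
      ext u
      simp only [Set.mem_setOf_eq, Set.mem_insert_iff, Set.mem_singleton_iff, subAddStep,
        Prod.ext_iff]
      constructor
      · rintro ⟨h1, h2⟩
        have hb : u.2 = u.1 - v.1 := by rw [← h1]; ring
        have h2a : 2 * (u.1 - c0) = 0 := by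
          have h3 : 2 * u.1 = v.1 + v.2 := by rw [← h1, ← h2]; ring
          rw [mul_sub, h3, h2c0, sub_self]
        rcases (two_mul_eq_zero_iff hr _).1 h2a with h | h
        · left
          have ha : u.1 = c0 := by rwa [sub_eq_zero] at h
          exact ⟨ha, by rw [hb, ha]⟩
        · right
          have ha : u.1 = c0 + 2^(r-1) := by
            rw [sub_eq_iff_eq_add] at h; rw [h]; ring
          exact ⟨ha, by rw [hb, ha]⟩
      · rintro (⟨h1, h2⟩ | ⟨h1, h2⟩)
        · constructor
          · rw [h1, h2]; ring
          · rw [h1, h2]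
            have : c0 + (c0 - v.1) = 2 * c0 - v.1 := by ring
            rw [this, h2c0]; ring
        · constructor
          · rw [h1, h2]; ring
          · rw [h1, h2]
            have : c0 + 2^(r-1) + (c0 + 2^(r-1) - v.1) = 2 * c0 - v.1 + 2 * 2^(r-1) := by ring
            rw [this, h2c0, hpow0]; ring
    rw [hset]
    apply Set.ncard_pair
    intro h
    rw [Prod.mk.injEq] at h
    have := h.1
    rw [left_eq_add] at this
    exact pow_rsub1_ne_zero hr this
  · -- P_i iterates to c
    intro i hi v hv
    have hir : i ≠ 2 * r := by omega
    rcases Nat.even_or_odd i with he | ho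
    · rw [P, if_neg hir, if_pos he] at hv
      obtain ⟨x, y, rfl, hxor⟩ := hv
      rw [Nat.even_iff] at he
      have hxy : x.val % 2 + y.val % 2 = 1 := by
        rw [Nat.odd_iff, Nat.odd_iff] at hxor
        rcases hxor with ⟨h1, h2⟩ | ⟨h1, h2⟩ <;> omega
      have hstep : 2*r - 1 - i = 2*(r - 1 - i/2) + 1 := by omega
      rw [hstep, Function.iterate_succ_apply,
        show subAddStep (2^r) ((2:ZMod (2^r))^(i/2) * x, (2:ZMod (2^r))^(i/2) * y)
          = ((2:ZMod (2^r))^(i/2) * (x - y), (2:ZMod (2^r))^(i/2) * (x + y)) by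
            simp only [subAddStep, Prod.mk.injEq]; constructor <;> ring]
      exact iter_core hr _ _ _ _ (by omega)
        (by rw [val_sub_mod2 hr]; omega)
        (by rw [val_add_mod2 hr]; omega)
    · rw [P, if_neg hir, if_neg (Nat.not_even_iff_odd.2 ho)] at hv
      obtain ⟨x, y, rfl, hx, hy⟩ := hv
      rw [Nat.odd_iff] at ho hx hy
      have hstep : 2*r - 1 - i = 2*(r - 1 - i/2) := by omega
      rw [hstep]
      exact iter_core hr _ _ _ _ (by omega) hx hy
  · -- M(0,0) = (0,0)
    simp [subAddStep]
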